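/- For 1 < p < 2, the function f⋆(x) = (1+|x|^{p/(p-1)})^{-(2-p)/p} on ℝ² satisfies −Δ_p f⋆ = 2((2-p)/(p-1))^{p-1} f⋆^{(2p/(2-p))−1}, where Δ_p u = div(|∇u|^{p-2}∇u). -/

import Mathlib

open MeasureTheory

/-- The divergence of a vector field on `ℝ²`. -/
noncomputable def divergence2 (V : EuclideanSpace ℝ (Fin 2) → EuclideanSpace ℝ (Fin 2))
    (x : EuclideanSpace ℝ (Fin 2)) : ℝ :=
  ∑ i : Fin 2, fderiv ℝ (fun y => V y i) x (EuclideanSpace.single i 1)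

section Aux

local notation "E2" => EuclideanSpace ℝ (Fin 2)

private lemma sq_rpow_AT (a : ℝ) (ha : 0 ≤ a) (t : ℝ) : ((a ^ 2 : ℝ)) ^ t = a ^ (2 * t) := by
  rw [← Real.rpow_natCast a 2, ← Real.rpow_mul ha]
  norm_num

/-- derivative of `y ↦ m * (1 + ‖y‖^q)^e` on `ℝ²` for `q > 2`. -/
private lemma scalar_aux_AT {q : ℝ} (hq2 : 2 < q) (m e : ℝ) (x : E2) :
    HasFDerivAt (fun y : E2 => m * (1 + ‖y‖ ^ q) ^ e)
      ((m * e * (1 + ‖x‖ ^ q) ^ (e - 1) * q * ‖x‖ ^ (q - 2)) • (innerSL ℝ x)) x := by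
  have hqhalf : 1 ≤ q / 2 := by linarith
  have h1 := (hasStrictFDerivAt_norm_sq x).hasFDerivAt
  have h2 : HasDerivAt (fun s : ℝ => s ^ (q / 2)) ((q / 2) * (‖x‖ ^ 2) ^ (q / 2 - 1)) (‖x‖ ^ 2) :=
    Real.hasDerivAt_rpow_const (Or.inr hqhalf)
  have h12 := h2.comp_hasFDerivAt x h1
  have hu : (0:ℝ) < 1 + (‖x‖ ^ 2) ^ (q / 2) := by positivity
  have h3 : HasDerivAt (fun s : ℝ => m * (1 + s) ^ e)
      (m * (e * (1 + (‖x‖ ^ 2) ^ (q / 2)) ^ (e - 1) * 1)) ((‖x‖ ^ 2) ^ (q / 2)) := by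
    exact ((Real.hasDerivAt_rpow_const (p := e) (Or.inl (ne_of_gt hu))).comp _
      ((hasDerivAt_id _).const_add 1)).const_mul m
  have h4 := h3.comp_hasFDerivAt x h12
  refine (h4.congr_fderiv ?_).congr_of_eventuallyEq (Filter.EventuallyEq.of_eq ?_)
  swap
  · funext y
    simp only [Function.comp_apply]
    rw [sq_rpow_AT _ (norm_nonneg y)]
    ring_nf
  · ext v
    have hc : m * e * (1 + ‖x‖ ^ q) ^ (e - 1) * q * ‖x‖ ^ (q - 2)
        = (m * (e * (1 + (‖x‖ ^ 2) ^ (q / 2)) ^ (e - 1) * 1))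
          * (q / 2 * (‖x‖ ^ 2) ^ (q / 2 - 1)) * 2 := by
      rw [sq_rpow_AT _ (norm_nonneg x), sq_rpow_AT _ (norm_nonneg x)]
      have e1 : 2 * (q / 2) = q := by ring
      have e2 : 2 * (q / 2 - 1) = q - 2 := by ring
      rw [e1, e2]; ring
    simp only [ContinuousLinearMap.smul_apply, innerSL_apply_apply, smul_eq_mul, nsmul_eq_mul]
    rw [hc]; push_cast; ring

/-- gradient of the Aubin–Talenti profile. -/
private lemma grad_aux_AT {p : ℝ} (hp1 : 1 < p) (hp2 : p < 2) (x : E2) :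
    HasGradientAt (fun y : E2 => (1 + ‖y‖ ^ (p / (p - 1))) ^ (-((2 - p) / p)))
      ((-((2 - p) / (p - 1)) * (1 + ‖x‖ ^ (p / (p - 1))) ^ (-((2 - p) / p) - 1)
        * ‖x‖ ^ (p / (p - 1) - 2)) • x) x := by
  have hp0 : (0:ℝ) < p := lt_trans one_pos hp1
  have hpm : (0:ℝ) < p - 1 := by linarith
  set q : ℝ := p / (p - 1) with hq
  have hq2 : 2 < q := by
    rw [hq, lt_div_iff₀ hpm]; linarith
  set α : ℝ := (2 - p) / p with hα
  have h4 := scalar_aux_AT hq2 1 (-α) x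
  rw [hasGradientAt_iff_hasFDerivAt]
  refine (h4.congr_fderiv ?_).congr_of_eventuallyEq (Filter.EventuallyEq.of_eq ?_)
  swap
  · funext y
    rw [one_mul]
  · ext v
    simp only [InnerProductSpace.toDual_apply_apply, ContinuousLinearMap.smul_apply,
      innerSL_apply_apply, real_inner_smul_left, smul_eq_mul]
    have e3 : -((2 - p) / (p - 1)) = 1 * (-α) * q := by
      rw [hα, hq]; field_simp; try ring
    rw [e3]; ring

end Aux

/-- For `1 < p < 2`, the Aubin-Talenti profile `f⋆(x) = (1+|x|^{p/(p-1)})^{-(2-p)/p}`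
satisfies `-Δ_p f⋆ = 2((2-p)/(p-1))^{p-1} f⋆^{2p/(2-p) - 1}` where
`Δ_p u = div(|∇u|^{p-2} ∇u)`. -/
theorem aubin_talenti_pLaplacian (p : ℝ) (hp1 : 1 < p) (hp2 : p < 2)
    (fstar : EuclideanSpace ℝ (Fin 2) → ℝ)
    (hfstar : ∀ x, fstar x = (1 + ‖x‖ ^ (p / (p - 1))) ^ (-((2 - p) / p))) :
    ∀ x : EuclideanSpace ℝ (Fin 2),
      -(divergence2 (fun y => ‖gradient fstar y‖ ^ (p - 2) • gradient fstar y) x)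
        = 2 * ((2 - p) / (p - 1)) ^ (p - 1) * (fstar x) ^ (2 * p / (2 - p) - 1) := by
  have hfe : fstar = fun y => (1 + ‖y‖ ^ (p / (p - 1))) ^ (-((2 - p) / p)) := funext hfstar
  subst hfe
  intro x
  have hp0 : (0:ℝ) < p := lt_trans one_pos hp1
  have hpm : (0:ℝ) < p - 1 := by linarith
  have h2p : (0:ℝ) < 2 - p := by linarith
  set q : ℝ := p / (p - 1) with hq
  have hq2 : 2 < q := by rw [hq, lt_div_iff₀ hpm]; linarith
  set α : ℝ := (2 - p) / p with hα
  set β : ℝ := -(2 * (p - 1) / p) with hβ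
  set K : ℝ := ((2 - p) / (p - 1)) ^ (p - 1) with hK
  have hKpos : 0 < K := Real.rpow_pos_of_pos (by positivity) _
  -- gradient formula
  have hgrad : ∀ y : EuclideanSpace ℝ (Fin 2),
      gradient (fun y => (1 + ‖y‖ ^ q) ^ (-α)) y
        = (-((2 - p) / (p - 1)) * (1 + ‖y‖ ^ q) ^ (-α - 1) * ‖y‖ ^ (q - 2)) • y :=
    fun y => (grad_aux_AT hp1 hp2 y).gradient
  -- the vector field equals the simplified one
  have hVW : (fun y : EuclideanSpace ℝ (Fin 2) =>
        ‖gradient (fun y => (1 + ‖y‖ ^ q) ^ (-α)) y‖ ^ (p - 2)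
          • gradient (fun y => (1 + ‖y‖ ^ q) ^ (-α)) y)
      = fun y : EuclideanSpace ℝ (Fin 2) => ((-K) * (1 + ‖y‖ ^ q) ^ β) • y := by
    funext y
    rw [hgrad y]
    by_cases hy : y = 0
    · subst hy; simp
    · have hny : 0 < ‖y‖ := norm_pos_iff.mpr hy
      have h1u : (0:ℝ) < 1 + ‖y‖ ^ q := by positivity
      set A : ℝ := (2 - p) / (p - 1) * (1 + ‖y‖ ^ q) ^ (-α - 1) * ‖y‖ ^ (q - 2) with hA
      have hApos : 0 < A := by
        rw [hA]
        have := Real.rpow_pos_of_pos h1u (-α - 1)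
        have := Real.rpow_pos_of_pos hny (q - 2)
        positivity
      have hcA : -((2 - p) / (p - 1)) * (1 + ‖y‖ ^ q) ^ (-α - 1) * ‖y‖ ^ (q - 2) = -A := by
        rw [hA]; ring
      rw [hcA, smul_smul, norm_smul]
      congr 1
      -- scalar identity
      have habs : ‖(-A : ℝ)‖ = A := by
        rw [Real.norm_eq_abs, abs_neg, abs_of_pos hApos]
      rw [habs, Real.mul_rpow hApos.le (norm_nonneg y)]
      have hApow : A ^ (p - 2) * ‖y‖ ^ (p - 2) * (-A) = -(A ^ (p - 1) * ‖y‖ ^ (p - 2)) := by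
        have : A ^ (p - 1) = A ^ (p - 2) * A := by
          rw [← Real.rpow_add_one hApos.ne' (p - 2)]; congr 1; ring
        rw [this]; ring
      have hstep : A ^ (p - 1) * ‖y‖ ^ (p - 2) = K * (1 + ‖y‖ ^ q) ^ β := by
        rw [hA, Real.mul_rpow (by positivity) (Real.rpow_nonneg (norm_nonneg y) _),
          Real.mul_rpow (by positivity) (Real.rpow_nonneg h1u.le _),
          ← Real.rpow_mul h1u.le, ← Real.rpow_mul (norm_nonneg y)]
        have eb : (-α - 1) * (p - 1) = β := by
          rw [hα, hβ]; field_simp; try ring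
        rw [eb]
        have hy0 : ‖y‖ ^ ((q - 2) * (p - 1)) * ‖y‖ ^ (p - 2) = 1 := by
          rw [← Real.rpow_add hny]
          have h0 : (q - 2) * (p - 1) + (p - 2) = 0 := by
            rw [hq]; field_simp; ring
          rw [h0, Real.rpow_zero]
        rw [hK]
        linear_combination ((2 - p) / (p - 1)) ^ (p - 1) * (1 + ‖y‖ ^ q) ^ β * hy0
      rw [hApow, hstep]; ring
  rw [hVW]
  -- compute the divergence of the simplified field
  set C : ℝ := (-K) * β * (1 + ‖x‖ ^ q) ^ (β - 1) * q * ‖x‖ ^ (q - 2) with hCdef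
  have hfder : ∀ i : Fin 2,
      fderiv ℝ (fun y : EuclideanSpace ℝ (Fin 2) => (((-K) * (1 + ‖y‖ ^ q) ^ β) • y) i) x
          (EuclideanSpace.single i 1)
        = (-K) * (1 + ‖x‖ ^ q) ^ β + C * (x i) * (x i) := by
    intro i
    have hgi := scalar_aux_AT hq2 (-K) β x
    have hpi : HasFDerivAt (fun y : EuclideanSpace ℝ (Fin 2) => (y i : ℝ))
        (EuclideanSpace.proj (𝕜 := ℝ) i) x :=
      (EuclideanSpace.proj (𝕜 := ℝ) (ι := Fin 2) i).hasFDerivAt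
    have hmul : HasFDerivAt (fun y : EuclideanSpace ℝ (Fin 2) => ((-K) * (1 + ‖y‖ ^ q) ^ β) * (y i)) _ x :=
      hgi.mul hpi
    have hfeq : (fun y : EuclideanSpace ℝ (Fin 2) => (((-K) * (1 + ‖y‖ ^ q) ^ β) • y) i)
        = fun y : EuclideanSpace ℝ (Fin 2) => ((-K) * (1 + ‖y‖ ^ q) ^ β) * (y i) := by
      funext y
      rw [PiLp.smul_apply, smul_eq_mul]
    rw [hfeq, hmul.fderiv]
    simp only [ContinuousLinearMap.add_apply, ContinuousLinearMap.smul_apply,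
      innerSL_apply_apply, PiLp.proj_apply, EuclideanSpace.single_apply,
      smul_eq_mul, if_pos rfl]
    rw [EuclideanSpace.inner_single_right]
    simp only [RCLike.conj_to_real, one_mul, conj_trivial]
    simp only [if_true]
    rw [hCdef]; ring
  have hxsq : x 0 * x 0 + x 1 * x 1 = ‖x‖ ^ 2 := by
    rw [← real_inner_self_eq_norm_sq, PiLp.inner_apply, Fin.sum_univ_two]
    simp [RCLike.inner_apply, conj_trivial]; ring
  have hUpos : (0:ℝ) < 1 + ‖x‖ ^ q := by positivity
  have hdiv : divergence2 (fun y : EuclideanSpace ℝ (Fin 2) =>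
        ((-K) * (1 + ‖y‖ ^ q) ^ β) • y) x
      = 2 * (-K) * (1 + ‖x‖ ^ q) ^ β + C * ‖x‖ ^ 2 := by
    rw [divergence2, Fin.sum_univ_two, hfder 0, hfder 1]
    linear_combination C * hxsq
  rw [hdiv]
  -- final algebra
  have hxq2 : C * ‖x‖ ^ 2 = (-K) * β * q * (1 + ‖x‖ ^ q) ^ (β - 1) * ‖x‖ ^ q := by
    have h2 : ‖x‖ ^ (q - 2) * ‖x‖ ^ 2 = ‖x‖ ^ q := by
      rcases eq_or_lt_of_le (norm_nonneg x) with h | h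
      · rw [← h, Real.zero_rpow (by linarith : q - 2 ≠ 0),
          Real.zero_rpow (by positivity : q ≠ 0)]
        ring
      · rw [← Real.rpow_natCast ‖x‖ 2, ← Real.rpow_add h]
        norm_num
    rw [hCdef]
    linear_combination ((-K) * β * q * (1 + ‖x‖ ^ q) ^ (β - 1)) * h2
  have hβq : β * q = -2 := by
    rw [hβ, hq]; field_simp
  have hUβ : (1 + ‖x‖ ^ q) ^ β = (1 + ‖x‖ ^ q) ^ (β - 1) * (1 + ‖x‖ ^ q) := by
    have h := Real.rpow_add_one hUpos.ne' (β - 1)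
    rwa [sub_add_cancel] at h
  rw [← Real.rpow_mul hUpos.le]
  have hexp : (-α) * (2 * p / (2 - p) - 1) = β - 1 := by
    rw [hα, hβ]; field_simp; ring
  rw [hexp, hUβ, hxq2]
  linear_combination (K * (1 + ‖x‖ ^ q) ^ (β - 1) * ‖x‖ ^ q) * hβq
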